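/- arXiv:2107.05705 — 3 statements merged into one kernel-verified Lean document; each statement's English description precedes it below -/
import Mathlib

section
/- Let P be a polynomial with complex coefficients, f(z) = e^{P(z)}, b_1, ..., b_k complex constants with b_k \ne 0, and A a nonzero complex number. If \sum_{j=1}^k b_j f^{(j)} = \sqrt{A}\, f identically (where \sqrt{A} \ne 0), then P has degree at most 1, and if P is non-constant then P(z) = cz + d for constants c \ne 0, d. -/
noncomputable def Qaux (P : Polynomial ℂ) : ℕ → Polynomial ℂ
  | 0 => 1
  | j + 1 => (Qaux P j).derivative + Qaux P j * P.derivative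

lemma hasDerivAt_Qexp (P Q : Polynomial ℂ) (z : ℂ) :
    HasDerivAt (fun z => Q.eval z * Complex.exp (P.eval z))
      ((Q.derivative + Q * P.derivative).eval z * Complex.exp (P.eval z)) z := by
  have h1 := Q.hasDerivAt z
  have h2 := (P.hasDerivAt z).cexp
  have h : HasDerivAt (fun z => Q.eval z * Complex.exp (P.eval z)) _ z := h1.mul h2
  convert h using 1
  simp only [Polynomial.eval_add, Polynomial.eval_mul]
  ring

lemma iterQ (P : Polynomial ℂ) (f : ℂ → ℂ) (hf : ∀ z, f z = Complex.exp (P.eval z)) :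
    ∀ j z, iteratedDeriv j f z = (Qaux P j).eval z * Complex.exp (P.eval z) := by
  intro j
  induction j with
  | zero => intro z; simp [Qaux, hf]
  | succ j ih =>
    intro z
    rw [iteratedDeriv_succ]
    have hfun : iteratedDeriv j f = fun z => (Qaux P j).eval z * Complex.exp (P.eval z) :=
      funext ih
    rw [hfun]
    rw [(hasDerivAt_Qexp P (Qaux P j) z).deriv]
    rfl

theorem stmt_9 (P : Polynomial ℂ) (f : ℂ → ℂ) (hf : ∀ z, f z = Complex.exp (P.eval z))
    (k : ℕ) (b : ℕ → ℂ) (hbk : b k ≠ 0) (A sqrtA : ℂ) (hA : A ≠ 0)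
    (hsq : sqrtA ^ 2 = A) (hsqrtA : sqrtA ≠ 0)
    (heq : ∀ z, ∑ j ∈ Finset.Icc 1 k, b j * iteratedDeriv j f z = sqrtA * f z) :
    P.natDegree ≤ 1 ∧
      (P.natDegree ≠ 0 → ∃ c d : ℂ, c ≠ 0 ∧ P = Polynomial.C c * Polynomial.X + Polynomial.C d) := by
  -- k ≥ 1
  have hk : 1 ≤ k := by
    by_contra hk
    have hk0 : k = 0 := by omega
    have h := heq 0
    rw [hk0] at h
    simp [hf] at h
    exact hsqrtA h
  -- polynomial identity
  have hpoly : ∑ j ∈ Finset.Icc 1 k, Polynomial.C (b j) * Qaux P j = Polynomial.C sqrtA := by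
    apply Polynomial.funext
    intro z
    have h := heq z
    have hrw : ∀ j ∈ Finset.Icc 1 k, b j * iteratedDeriv j f z
        = b j * ((Qaux P j).eval z * Complex.exp (P.eval z)) := by
      intro j _
      rw [iterQ P f hf]
    rw [Finset.sum_congr rfl hrw, hf z] at h
    have hE : Complex.exp (P.eval z) ≠ 0 := Complex.exp_ne_zero _
    have h2 : (∑ j ∈ Finset.Icc 1 k, b j * (Qaux P j).eval z) * Complex.exp (P.eval z)
        = sqrtA * Complex.exp (P.eval z) := by
      rw [Finset.sum_mul]
      simpa [mul_assoc] using h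
    have h3 := mul_right_cancel₀ hE h2
    simp [Polynomial.eval_finset_sum, h3]
  -- degree bound
  have hdeg : P.natDegree ≤ 1 := by
    by_contra hdeg
    push_neg at hdeg
    obtain ⟨n, hn⟩ : ∃ n, P.natDegree = n := ⟨_, rfl⟩
    have h2 : 2 ≤ n := by omega
    obtain ⟨m, hm⟩ : ∃ m, n = m + 1 := ⟨n - 1, by omega⟩
    have hm1 : 1 ≤ m := by omega
    have hP0 : P ≠ 0 := fun h => by rw [h] at hn; simp at hn; omega
    have hlcne : P.coeff n ≠ 0 := by
      have := Polynomial.leadingCoeff_ne_zero.mpr hP0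
      rwa [Polynomial.leadingCoeff, hn] at this
    have hcoeffD : P.derivative.coeff m = P.coeff n * n := by
      rw [Polynomial.coeff_derivative, hm]
      push_cast
      ring
    have hDne : P.derivative.coeff m ≠ 0 := by
      rw [hcoeffD]
      exact mul_ne_zero hlcne (Nat.cast_ne_zero.mpr (by omega))
    have hDle : P.derivative.natDegree ≤ m := by
      have := Polynomial.natDegree_derivative_le P
      omega
    have hDeq : P.derivative.natDegree = m :=
      le_antisymm hDle (Polynomial.le_natDegree_of_ne_zero hDne)
    have hlcD : P.derivative.leadingCoeff = P.coeff n * n := by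
      rw [Polynomial.leadingCoeff, hDeq, hcoeffD]
    have hlcDne : P.derivative.leadingCoeff ≠ 0 := by rw [hlcD, ← hcoeffD]; exact hDne
    -- invariant for Qaux
    have hQ : ∀ j, (Qaux P j).coeff (j * m) = P.derivative.leadingCoeff ^ j ∧
        (Qaux P j).natDegree ≤ j * m := by
      intro j
      induction j with
      | zero => simp [Qaux]
      | succ j ih =>
        obtain ⟨ihc, ihd⟩ := ih
        have harith : (j + 1) * m = j * m + m := by ring
        have hQne : (Qaux P j).coeff (j * m) ≠ 0 := by
          rw [ihc]; exact pow_ne_zero _ hlcDne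
        have hQdeg : (Qaux P j).natDegree = j * m :=
          le_antisymm ihd (Polynomial.le_natDegree_of_ne_zero hQne)
        have hQlc : (Qaux P j).leadingCoeff = P.derivative.leadingCoeff ^ j := by
          rw [Polynomial.leadingCoeff, hQdeg, ihc]
        constructor
        · show ((Qaux P j).derivative + Qaux P j * P.derivative).coeff ((j + 1) * m) = _
          rw [Polynomial.coeff_add]
          have h1 : (Qaux P j).derivative.coeff ((j + 1) * m) = 0 := by
            apply Polynomial.coeff_eq_zero_of_natDegree_lt
            have := Polynomial.natDegree_derivative_le (Qaux P j)
            omega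
          have hprod : (Qaux P j * P.derivative).coeff ((j + 1) * m)
              = P.derivative.leadingCoeff ^ (j + 1) := by
            have hc := Polynomial.coeff_mul_degree_add_degree (Qaux P j) P.derivative
            rw [hQdeg, hDeq, ← harith] at hc
            rw [hc, hQlc, pow_succ]
          rw [h1, hprod, zero_add]
        · show ((Qaux P j).derivative + Qaux P j * P.derivative).natDegree ≤ (j + 1) * m
          apply (Polynomial.natDegree_add_le _ _).trans
          apply max_le
          · have := Polynomial.natDegree_derivative_le (Qaux P j)
            omega
          · have := Polynomial.natDegree_mul_le (p := Qaux P j) (q := P.derivative)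
            omega
    -- coefficient of sum at k * m
    have hcoeff : (∑ j ∈ Finset.Icc 1 k, Polynomial.C (b j) * Qaux P j).coeff (k * m)
        = b k * P.derivative.leadingCoeff ^ k := by
      rw [Polynomial.finset_sum_coeff]
      rw [Finset.sum_eq_single k]
      · rw [Polynomial.coeff_C_mul, (hQ k).1]
      · intro j hj hjk
        rw [Polynomial.coeff_C_mul]
        have hj' : j ≤ k := (Finset.mem_Icc.mp hj).2
        have hjlt : j < k := lt_of_le_of_ne hj' hjk
        have hlt : j * m < k * m := mul_lt_mul_of_pos_right hjlt (by omega : 0 < m)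
        have hz : (Qaux P j).coeff (k * m) = 0 := by
          apply Polynomial.coeff_eq_zero_of_natDegree_lt
          have := (hQ j).2
          omega
        rw [hz, mul_zero]
      · intro h
        exact absurd (Finset.mem_Icc.mpr ⟨hk, le_refl k⟩) h
    rw [hpoly] at hcoeff
    have hkm : k * m ≠ 0 := Nat.mul_ne_zero (by omega) (by omega)
    rw [Polynomial.coeff_C, if_neg hkm] at hcoeff
    exact absurd hcoeff.symm (mul_ne_zero hbk (pow_ne_zero _ hlcDne))
  refine ⟨hdeg, fun hne => ?_⟩
  refine ⟨P.coeff 1, P.coeff 0, ?_, Polynomial.eq_X_add_C_of_natDegree_le_one hdeg⟩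
  have h1 : P.natDegree = 1 := by omega
  have hP0 : P ≠ 0 := fun h => by rw [h] at h1; simp at h1
  have := Polynomial.leadingCoeff_ne_zero.mpr hP0
  rwa [Polynomial.leadingCoeff, h1] at this
end

section
/- Let f(z) = c_1 e^{cz} + c_2 e^{-cz} with c, c_1, c_2 nonzero complex numbers and c^2 \ne 1. Suppose 4 c^{2k} c_1 c_2 = a_1^2 (c^{2k} - 1) for an odd positive integer k and a nonzero complex number a_1, and set a_2 = -a_1. Then (f^{(k)}(z) - a_1)(f^{(k)}(z) - a_2) = c^{2k} (f(z) - a_1)(f(z) - a_2) for all z \in \mathbb{C}. -/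
lemma aux_hasDerivAt (c c₁ c₂ z : ℂ) :
    HasDerivAt (fun z => c₁ * Complex.exp (c * z) + c₂ * Complex.exp (-c * z))
      (c * c₁ * Complex.exp (c * z) + (-c) * c₂ * Complex.exp (-c * z)) z := by
  have h1 : HasDerivAt (fun z : ℂ => c₁ * Complex.exp (c * z))
      (c * c₁ * Complex.exp (c * z)) z := by
    have := (((hasDerivAt_id z).const_mul c).cexp).const_mul c₁
    simp only [id] at this; exact this.congr_deriv (by ring)
  have h2 : HasDerivAt (fun z : ℂ => c₂ * Complex.exp (-c * z))
      ((-c) * c₂ * Complex.exp (-c * z)) z := by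
    have := (((hasDerivAt_id z).const_mul (-c)).cexp).const_mul c₂
    simp only [id] at this; exact this.congr_deriv (by ring)
  exact h1.add h2

lemma aux_iter (c : ℂ) : ∀ (n : ℕ) (c₁ c₂ z : ℂ),
    iteratedDeriv n (fun z => c₁ * Complex.exp (c * z) + c₂ * Complex.exp (-c * z)) z
      = c ^ n * c₁ * Complex.exp (c * z) + (-c) ^ n * c₂ * Complex.exp (-c * z) := by
  intro n
  induction n with
  | zero => intro c₁ c₂ z; simp
  | succ n ih =>
    intro c₁ c₂ z
    rw [iteratedDeriv_succ']
    have hd : deriv (fun z => c₁ * Complex.exp (c * z) + c₂ * Complex.exp (-c * z))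
        = fun z => (c * c₁) * Complex.exp (c * z) + ((-c) * c₂) * Complex.exp (-c * z) := by
      funext w; exact (aux_hasDerivAt c c₁ c₂ w).deriv
    rw [hd, ih (c * c₁) ((-c) * c₂) z]
    ring

theorem stmt_12 (c c₁ c₂ a₁ a₂ : ℂ) (hc : c ≠ 0) (hc₁ : c₁ ≠ 0) (hc₂ : c₂ ≠ 0)
    (hc2 : c ^ 2 ≠ 1) (k : ℕ) (hk : 0 < k) (hodd : Odd k) (ha₁ : a₁ ≠ 0)
    (ha : a₂ = -a₁)
    (hrel : 4 * c ^ (2 * k) * c₁ * c₂ = a₁ ^ 2 * (c ^ (2 * k) - 1))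
    (f : ℂ → ℂ)
    (hf : ∀ z, f z = c₁ * Complex.exp (c * z) + c₂ * Complex.exp (-c * z)) :
    ∀ z, (iteratedDeriv k f z - a₁) * (iteratedDeriv k f z - a₂) =
      c ^ (2 * k) * ((f z - a₁) * (f z - a₂)) := by
  intro z
  have hfe : f = fun z => c₁ * Complex.exp (c * z) + c₂ * Complex.exp (-c * z) :=
    funext hf
  have hit : iteratedDeriv k f z
      = c ^ k * c₁ * Complex.exp (c * z) - c ^ k * c₂ * Complex.exp (-c * z) := by
    rw [hfe, aux_iter, hodd.neg_pow]; ring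
  have hmul : Complex.exp (c * z) * Complex.exp (-c * z) = 1 := by
    rw [← Complex.exp_add]; ring_nf; exact Complex.exp_zero
  have h2k : c ^ (2 * k) = (c ^ k) ^ 2 := by rw [← pow_mul, mul_comm]
  rw [hit, hf, ha]
  rw [h2k] at hrel ⊢
  linear_combination (-4*(c^k)^2*c₁*c₂) * hmul - hrel
end

section
/- Let f and g be holomorphic functions on \mathbb{C}, a_1 \ne a_2 complex numbers, and h = \frac{(g-a_1)(g-a_2)}{(f-a_1)(f-a_2)} wherever defined. If z_0 is a zero of both (f-a_1)(f-a_2) and (g-a_1)(g-a_2) of the same multiplicity p \ge 2 with f(z_0) = g(z_0), and h extends holomorphically and non-vanishing at z_0, then z_0 is a zero of (f' h - g')(f' h + g') of multiplicity at least 2(p-1) \ge p. -/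
open Filter Topology

private lemma aux_analyticAt_deriv {φ : ℂ → ℂ} {x : ℂ} (h : AnalyticAt ℂ φ x) :
    AnalyticAt ℂ (deriv φ) x := by
  obtain ⟨s, hs, hφs⟩ := h.eventually_analyticAt.exists_mem
  exact (AnalyticOnNhd.deriv (fun y hy => hφs y hy)) x (mem_of_mem_nhds hs)

private lemma aux_le_order {F ψ : ℂ → ℂ} {z₀ : ℂ} (hF : AnalyticAt ℂ F z₀) (n : ℕ)
    (hψ : AnalyticAt ℂ ψ z₀)
    (heq : ∀ᶠ z in nhds z₀, F z = (z - z₀) ^ n * ψ z) :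
    (n : ℕ∞) ≤ analyticOrderAt F z₀ := by
  by_cases htop : analyticOrderAt F z₀ = ⊤
  · simp [htop]
  · set m : ℕ := (analyticOrderAt F z₀).toNat with hmdef
    have hm : (m : ℕ∞) = analyticOrderAt F z₀ := ENat.coe_toNat htop
    obtain ⟨φ, hφ, hφ0, heqm⟩ := (hF.analyticOrderAt_eq_natCast (n := m)).mp hm.symm
    rw [← hm]
    by_contra h'
    have h' : m < n := by exact_mod_cast not_le.mp h'
    simp only [smul_eq_mul] at heqm
    -- m < n; derive contradiction
    have h1 : ∀ᶠ z in 𝓝[≠] z₀, φ z = (z - z₀) ^ (n - m) * ψ z := by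
      filter_upwards [nhdsWithin_le_nhds heqm, nhdsWithin_le_nhds heq,
        self_mem_nhdsWithin] with z hz1 hz2 hz3
      have hzne : z - z₀ ≠ 0 := sub_ne_zero.mpr hz3
      have : (z - z₀) ^ m * φ z = (z - z₀) ^ m * ((z - z₀) ^ (n - m) * ψ z) := by
        rw [← hz1, hz2, ← mul_assoc, ← pow_add]
        congr 2
        omega
      exact mul_left_cancel₀ (pow_ne_zero m hzne) this
    have h2 : Tendsto φ (𝓝[≠] z₀) (𝓝 (φ z₀)) :=
      (hφ.continuousAt.tendsto).mono_left nhdsWithin_le_nhds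
    have h3 : Tendsto (fun z => (z - z₀) ^ (n - m) * ψ z) (𝓝[≠] z₀) (𝓝 0) := by
      have : Tendsto (fun z => (z - z₀) ^ (n - m) * ψ z) (𝓝 z₀)
          (𝓝 ((z₀ - z₀) ^ (n - m) * ψ z₀)) := by
        exact (((continuous_id.sub continuous_const).pow _).tendsto z₀).mul
          hψ.continuousAt.tendsto
      rw [sub_self, zero_pow (by omega), zero_mul] at this
      exact this.mono_left nhdsWithin_le_nhds
    have := tendsto_nhds_unique (h2.congr' h1) h3
    exact hφ0 this

private lemma aux_deriv_factor {f φ : ℂ → ℂ} {a b z₀ : ℂ} (hf : Differentiable ℂ f)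
    (haz : f z₀ = a) (hbz : f z₀ ≠ b) (p : ℕ) (hp : 1 ≤ p)
    (hφ : AnalyticAt ℂ φ z₀)
    (heq : ∀ᶠ z in nhds z₀, (f z - a) * (f z - b) = (z - z₀) ^ p * φ z) :
    ∃ ψ : ℂ → ℂ, AnalyticAt ℂ ψ z₀ ∧
      ∀ᶠ z in nhds z₀, deriv f z = (z - z₀) ^ (p - 1) * ψ z := by
  have hfb : AnalyticAt ℂ (fun z => f z - b) z₀ :=
    (hf.analyticAt z₀).sub analyticAt_const
  have hfb0 : f z₀ - b ≠ 0 := sub_ne_zero.mpr hbz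
  set φ₁ : ℂ → ℂ := fun z => φ z / (f z - b) with hφ₁def
  have hφ₁ : AnalyticAt ℂ φ₁ z₀ := hφ.div hfb hfb0
  have hne : ∀ᶠ z in 𝓝 z₀, f z - b ≠ 0 := by
    have : ContinuousAt (fun z => f z - b) z₀ := hfb.continuousAt
    exact this.eventually_ne hfb0
  have heq1 : ∀ᶠ z in 𝓝 z₀, f z - a = (z - z₀) ^ p * φ₁ z := by
    filter_upwards [heq, hne] with z hz1 hz2
    show f z - a = (z - z₀) ^ p * (φ z / (f z - b))
    rw [mul_div_assoc', eq_div_iff hz2]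
    linear_combination hz1
  have hfeq : f =ᶠ[𝓝 z₀] fun z => (z - z₀) ^ p * φ₁ z + a := by
    filter_upwards [heq1] with z hz
    exact eq_add_of_sub_eq hz
  refine ⟨fun z => (p : ℂ) * φ₁ z + (z - z₀) * deriv φ₁ z, ?_, ?_⟩
  · exact (analyticAt_const.mul hφ₁).add
      (((analyticAt_id).sub analyticAt_const).mul (aux_analyticAt_deriv hφ₁))
  · have hder := hfeq.deriv
    filter_upwards [hder.eventually_nhds.mono (fun z hz => hz.self_of_nhds),
      hφ₁.eventually_analyticAt] with z hz hφ₁z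
    rw [hz]
    have h1 : HasDerivAt (fun w => (w - z₀) ^ p) ((p : ℂ) * (z - z₀) ^ (p - 1) * 1) z :=
      ((hasDerivAt_id z).sub_const z₀).pow p
    have h2 : HasDerivAt φ₁ (deriv φ₁ z) z := hφ₁z.differentiableAt.hasDerivAt
    have h3 : deriv (fun z => (z - z₀) ^ p * φ₁ z + a) z = _ := ((h1.mul h2).add_const a).deriv
    rw [h3]
    obtain ⟨q, hq⟩ : ∃ q, p = q + 1 := ⟨p - 1, (Nat.succ_pred_eq_of_pos hp).symm⟩
    subst hq
    simp only [Nat.add_sub_cancel, pow_succ]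
    push_cast
    ring

theorem stmt_14 (f g h : ℂ → ℂ) (a₁ a₂ : ℂ) (ha : a₁ ≠ a₂) (z₀ : ℂ)
    (hf : Differentiable ℂ f) (hg : Differentiable ℂ g)
    (hFa : AnalyticAt ℂ (fun z => (f z - a₁) * (f z - a₂)) z₀)
    (hGa : AnalyticAt ℂ (fun z => (g z - a₁) * (g z - a₂)) z₀)
    (hh : AnalyticAt ℂ h z₀) (hh0 : h z₀ ≠ 0)
    (hrel : ∀ᶠ z in nhds z₀,
      (g z - a₁) * (g z - a₂) = h z * ((f z - a₁) * (f z - a₂)))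
    (p : ℕ) (hp : 2 ≤ p)
    (hordF : analyticOrderAt (fun z => (f z - a₁) * (f z - a₂)) z₀ = (p : ℕ∞)) (hordG : analyticOrderAt (fun z => (g z - a₁) * (g z - a₂)) z₀ = (p : ℕ∞))
    (hfg : f z₀ = g z₀)
    (hΦ : AnalyticAt ℂ
      (fun z => (deriv f z * h z - deriv g z) * (deriv f z * h z + deriv g z)) z₀) :
    ((2 * (p - 1) : ℕ) : ℕ∞) ≤ analyticOrderAt
      (fun z => (deriv f z * h z - deriv g z) * (deriv f z * h z + deriv g z)) z₀ := by
  obtain ⟨φF, hφF, hφF0, heqF⟩ := (hFa.analyticOrderAt_eq_natCast (n := p)).mp hordF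
  obtain ⟨φG, hφG, hφG0, heqG⟩ := (hGa.analyticOrderAt_eq_natCast (n := p)).mp hordG
  simp only [smul_eq_mul] at heqF heqG
  have hp1 : 1 ≤ p := by omega
  have hF0 : (f z₀ - a₁) * (f z₀ - a₂) = 0 := by
    have := heqF.self_of_nhds
    simpa [sub_self, zero_pow (by omega : p ≠ 0)] using this
  have key : ∀ a b : ℂ, f z₀ = a → f z₀ ≠ b →
      (∀ᶠ z in nhds z₀, (f z - a) * (f z - b) = (z - z₀) ^ p * φF z) →
      (∀ᶠ z in nhds z₀, (g z - a) * (g z - b) = (z - z₀) ^ p * φG z) →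
      ((2 * (p - 1) : ℕ) : ℕ∞) ≤ analyticOrderAt
        (fun z => (deriv f z * h z - deriv g z) * (deriv f z * h z + deriv g z)) z₀ := by
    intro a b hfa hfb heqF' heqG'
    obtain ⟨ψ₁, hψ₁, heψ₁⟩ := aux_deriv_factor hf hfa hfb p hp1 hφF heqF'
    obtain ⟨ψ₂, hψ₂, heψ₂⟩ := aux_deriv_factor hg (hfg ▸ hfa) (hfg ▸ hfb) p hp1 hφG heqG'
    refine aux_le_order hΦ (2 * (p - 1))
      (ψ := fun z => (ψ₁ z * h z - ψ₂ z) * (ψ₁ z * h z + ψ₂ z)) ?_ ?_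
    · exact ((hψ₁.mul hh).sub hψ₂).mul ((hψ₁.mul hh).add hψ₂)
    · filter_upwards [heψ₁, heψ₂] with z hz1 hz2
      rw [hz1, hz2, show 2 * (p - 1) = (p - 1) + (p - 1) by ring, pow_add]
      ring
  rcases mul_eq_zero.mp hF0 with h0 | h0
  · have hfa : f z₀ = a₁ := sub_eq_zero.mp h0
    have hfb : f z₀ ≠ a₂ := by rw [hfa]; exact ha
    exact key a₁ a₂ hfa hfb heqF heqG
  · have hfa : f z₀ = a₂ := sub_eq_zero.mp h0
    have hfb : f z₀ ≠ a₁ := by rw [hfa]; exact ha.symm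
    exact key a₂ a₁ hfa hfb
      (heqF.mono fun z hz => by rw [mul_comm]; exact hz)
      (heqG.mono fun z hz => by rw [mul_comm]; exact hz)
end
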